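/- For every signed composition μ of n: the multiplication map T_{−μ} × 𝒟_{μ^+} → G_{r,n}, (t,d) ↦ t·d, is a bijection onto 𝓔_μ; 𝓔_μ is a complete set of right coset representatives for G_μ in G_{r,n} (each right coset G_μ g contains exactly one element of 𝓔_μ); and consequently every right coset of G_μ in G_{r,n} contains a unique element of minimal Π-length. -/

import Mathlib

open Equiv SemidirectProduct

namespace CycSol

/-- The action of the symmetric group on the "torus" `(ℤ/r)^n` by permuting coordinates. -/
def act (r n : ℕ) : Equiv.Perm (Fin n) →* MulAut (Multiplicative (Fin n → ZMod r)) where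
  toFun w :=
    { toFun := fun f => Multiplicative.ofAdd fun i => Multiplicative.toAdd f (w⁻¹ i)
      invFun := fun f => Multiplicative.ofAdd fun i => Multiplicative.toAdd f (w i)
      left_inv := fun f => by
        show Multiplicative.ofAdd (fun i => Multiplicative.toAdd f (w⁻¹ (w i))) = f
        simp
      right_inv := fun f => by
        show Multiplicative.ofAdd (fun i => Multiplicative.toAdd f (w (w⁻¹ i))) = f
        simp
      map_mul' := fun f g => rfl }
  map_one' := by
    refine MulEquiv.ext fun f => ?_
    show Multiplicative.ofAdd (fun i => Multiplicative.toAdd f ((1 : Equiv.Perm (Fin n))⁻¹ i)) = f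
    simp
  map_mul' := fun u v => by
    refine MulEquiv.ext fun f => ?_
    show Multiplicative.ofAdd (fun i => Multiplicative.toAdd f ((u * v)⁻¹ i)) = _
    simp [Equiv.Perm.mul_apply, mul_inv_rev]

/-- The wreath product `(ℤ/r) ≀ S_n`, i.e. the complex reflection group `G(r,1,n)`. -/
abbrev Grn (r n : ℕ) :=
  SemidirectProduct (Multiplicative (Fin n → ZMod r)) (Equiv.Perm (Fin n)) (act r n)

/-- The generator `t_i`. -/
def tGen (r n : ℕ) (i : Fin n) : Grn r n :=
  inl (Multiplicative.ofAdd (Pi.single i 1))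

/-- `sGen i j` is the transposition `(i,j)`, viewed inside `G(r,1,n)`. -/
def sGen (r n : ℕ) (i j : Fin n) : Grn r n := inr (Equiv.swap i j)

/-- `t^α` for a vector `α ∈ {0,…,r-1}^n`. -/
def tPow (r n : ℕ) (α : Fin n → Fin r) : Grn r n :=
  inl (Multiplicative.ofAdd fun i => ((α i : ℕ) : ZMod r))

/-- The generating set `Π = {t_1,…,t_n, s_1,…,s_{n-1}}`. -/
def PiSet (r n : ℕ) : Set (Grn r n) :=
  {g | (∃ i : Fin n, g = tGen r n i) ∨
       (∃ i j : Fin n, (j : ℕ) = (i : ℕ) + 1 ∧ g = sGen r n i j)}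

/-- The `Π`-length of an element of `G(r,1,n)`. -/
noncomputable def len (r n : ℕ) (g : Grn r n) : ℕ :=
  sInf {k | ∃ l : List (Grn r n), l.length = k ∧ (∀ x ∈ l, x ∈ PiSet r n) ∧ l.prod = g}

/-- A signed composition of `n`: a list of nonzero integers whose absolute values sum to `n`. -/
def IsSignedComp (n : ℕ) (μ : List ℤ) : Prop :=
  (∀ x ∈ μ, x ≠ 0) ∧ (μ.map Int.natAbs).sum = n

/-- The type of signed compositions of `n`. -/
abbrev SComp (n : ℕ) := {l : List ℤ // IsSignedComp n l}

/-- `μ̄_i = |μ_1| + ⋯ + |μ_i|`. -/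
def absPrefix (μ : List ℤ) (i : ℕ) : ℕ := ((μ.take i).map Int.natAbs).sum

/-- The subset `Π_μ ⊆ Π` attached to a signed composition `μ` (here `t_j, s_j` are indexed by
`j : Fin n`, i.e. `0`-based). -/
def PiMu (r n : ℕ) (μ : List ℤ) : Set (Grn r n) :=
  {g | (∃ j : Fin n, (∃ i, i < μ.length ∧ 0 < μ.getD i 0 ∧
          absPrefix μ i ≤ (j : ℕ) ∧ (j : ℕ) < absPrefix μ (i + 1)) ∧ g = tGen r n j) ∨
       (∃ j k : Fin n, (k : ℕ) = (j : ℕ) + 1 ∧ (∃ i, i < μ.length ∧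
          absPrefix μ i ≤ (j : ℕ) ∧ (k : ℕ) < absPrefix μ (i + 1)) ∧ g = sGen r n j k)}

/-- The reflection subgroup `G_μ = ⟨Π_μ⟩`. -/
def Gmu (r n : ℕ) (μ : List ℤ) : Subgroup (Grn r n) := Subgroup.closure (PiMu r n μ)

/-- The subgroup `T = (ℤ/r)^n` of `G(r,1,n)`. -/
def Tsub (r n : ℕ) : Subgroup (Grn r n) :=
  (inl : Multiplicative (Fin n → ZMod r) →* Grn r n).range

/-- The subgroup `S_n` of `G(r,1,n)`. -/
def Ssub (r n : ℕ) : Subgroup (Grn r n) :=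
  (inr : Equiv.Perm (Fin n) →* Grn r n).range

/-- `T_{-μ}`: the subgroup of `T` generated by those `t_i` not lying in `G_μ`. -/
def Tneg (r n : ℕ) (μ : List ℤ) : Subgroup (Grn r n) :=
  Subgroup.closure {g | ∃ i : Fin n, tGen r n i ∉ Gmu r n μ ∧ g = tGen r n i}

/-- The Young subgroup `S_{μ^+} = G_μ ∩ S_n`, as a subgroup of `S_n`. -/
def youngS (r n : ℕ) (μ : List ℤ) : Subgroup (Equiv.Perm (Fin n)) :=
  (Gmu r n μ).comap (inr : Equiv.Perm (Fin n) →* Grn r n)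

/-- `𝒟_{μ^+}`: the permutations of minimal (Coxeter = `Π`-) length in their right coset
`S_{μ^+} w`. -/
noncomputable def Dset (r n : ℕ) (μ : List ℤ) : Set (Equiv.Perm (Fin n)) :=
  {d | ∀ w : Equiv.Perm (Fin n), w * d⁻¹ ∈ youngS r n μ →
        len r n (inr d) ≤ len r n (inr w)}

/-- `𝒟_{μ^+ν^+} = 𝒟_{μ^+} ∩ 𝒟_{ν^+}^{-1}`. -/
noncomputable def DD (r n : ℕ) (μ ν : List ℤ) : Set (Equiv.Perm (Fin n)) :=
  Dset r n μ ∩ {d | d⁻¹ ∈ Dset r n ν}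

/-- `𝓔_μ`: the elements of minimal `Π`-length in their right coset `G_μ e`. -/
noncomputable def Ecal (r n : ℕ) (μ : List ℤ) : Set (Grn r n) :=
  {e | ∀ g : Grn r n, g * e⁻¹ ∈ Gmu r n μ → len r n e ≤ len r n g}

/-- `E_μ = Σ_{e ∈ 𝓔_μ} e` in the group algebra `R G(r,1,n)`. -/
noncomputable def Emu (R : Type) [CommRing R] (r n : ℕ) (μ : List ℤ) :
    MonoidAlgebra R (Grn r n) :=
  ∑ᶠ e ∈ Ecal r n μ, MonoidAlgebra.of R (Grn r n) e

/-- The generating set `{E_μ : μ a signed composition of n}` of the cyclotomic Solomon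
algebra. -/
def SolSet (R : Type) [CommRing R] (r n : ℕ) : Set (MonoidAlgebra R (Grn r n)) :=
  {x | ∃ μ : List ℤ, IsSignedComp n μ ∧ x = Emu R r n μ}

/-- The cyclotomic Solomon algebra `Sol(G(r,1,n))`. -/
noncomputable def Sol (R : Type) [CommRing R] (r n : ℕ) :
    Subalgebra R (MonoidAlgebra R (Grn r n)) :=
  Algebra.adjoin R (SolSet R r n)



variable {n : ℕ}

/-- inversion set -/
def Invs (w : Perm (Fin n)) : Finset (Fin n × Fin n) :=
  Finset.univ.filter (fun p => p.1 < p.2 ∧ w p.2 < w p.1)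

noncomputable def invn (w : Perm (Fin n)) : ℕ := (Invs w).card

lemma mem_Invs {w : Perm (Fin n)} {p : Fin n × Fin n} :
    p ∈ Invs w ↔ p.1 < p.2 ∧ w p.2 < w p.1 := by
  simp [Invs]

lemma swap_mono {j k x y : Fin n} (hjk : (k:ℕ) = (j:ℕ) + 1) (hxy : x < y)
    (h : ¬(x = j ∧ y = k)) : swap j k x < swap j k y := by
  rw [Fin.lt_iff_val_lt_val] at hxy ⊢
  rw [swap_apply_def, swap_apply_def]
  split_ifs <;> simp_all [Fin.ext_iff] <;> omega

/-- if `σ x > σ y` with `x < y` then `x = j` and `y = k` -/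
lemma swap_antimono {j k x y : Fin n} (hjk : (k:ℕ) = (j:ℕ) + 1) (hxy : x < y)
    (h : swap j k y < swap j k x) : x = j ∧ y = k := by
  by_contra hc
  exact absurd (swap_mono hjk hxy hc) (not_lt.mpr h.le)

lemma invn_one : invn (1 : Perm (Fin n)) = 0 := by
  rw [invn, Invs, Finset.card_eq_zero, Finset.filter_eq_empty_iff]
  rintro p -
  simp only [Perm.one_apply]
  exact fun h => lt_asymm h.1 h.2

lemma strictMono_of_adj (w : Fin n → Fin n) (h : ∀ j k : Fin n, (k:ℕ)=(j:ℕ)+1 → w j < w k) :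
    StrictMono w := by
  have key : ∀ m : ℕ, ∀ a b : Fin n, (b:ℕ) = (a:ℕ) + m + 1 → w a < w b := by
    intro m
    induction m with
    | zero => exact fun a b hb => h a b (by omega)
    | succ m ih =>
        intro a b hb
        have hb1 : (b:ℕ)-1 < n := by omega
        exact lt_trans (ih a ⟨(b:ℕ)-1, hb1⟩ (by simp; omega)) (h ⟨(b:ℕ)-1, hb1⟩ b (by simp; omega))
  intro a b hab
  exact key ((b:ℕ)-(a:ℕ)-1) a b (by have := Fin.lt_iff_val_lt_val.mp hab; omega)

lemma eq_one_of_strictMono (w : Perm (Fin n)) (hf : StrictMono w) : w = 1 := by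
  have h := (StrictMono.range_inj (f := (w : Fin n → Fin n)) (g := id) hf strictMono_id).mp
    (by rw [Set.range_id]; exact w.surjective.range_eq)
  exact Equiv.ext fun x => congrFun h x

lemma eq_one_of_invn_eq_zero {w : Perm (Fin n)} (h : invn w = 0) : w = 1 := by
  apply eq_one_of_strictMono
  apply strictMono_of_adj
  intro j k hjk
  have hjk' : j < k := by rw [Fin.lt_iff_val_lt_val]; omega
  rcases lt_or_ge (w j) (w k) with h'|h'
  · exact h'
  rcases lt_or_eq_of_le h' with h'|h'
  · exfalso
    have : (j, k) ∈ Invs w := mem_Invs.mpr ⟨hjk', h'⟩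
    simp [invn, Finset.card_eq_zero] at h
    rw [h] at this
    exact absurd this (Finset.notMem_empty _)
  · exact absurd (w.injective h').symm (Fin.ne_of_lt hjk')

/-- a permutation other than 1 has an adjacent (right) descent -/
lemma exists_descent {w : Perm (Fin n)} (h : w ≠ 1) :
    ∃ j k : Fin n, (k:ℕ) = (j:ℕ)+1 ∧ w k < w j := by
  by_contra hc
  push_neg at hc
  apply h
  apply eq_one_of_strictMono
  apply strictMono_of_adj
  intro j k hjk
  have h1 := hc j k hjk
  have : w j ≠ w k := fun he => by
    have := w.injective he; simp [Fin.ext_iff] at this; omega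
  exact lt_of_le_of_ne h1 this




variable {n : ℕ}

lemma Invs_swap_mul_subset {j k : Fin n} (hjk : (k:ℕ)=(j:ℕ)+1) (w : Perm (Fin n)) :
    Invs (swap j k * w) ⊆ insert (w⁻¹ j, w⁻¹ k) (Invs w) := by
  intro p hp
  rw [mem_Invs] at hp
  obtain ⟨hlt, hinv⟩ := hp
  simp only [Perm.mul_apply] at hinv
  rcases lt_or_ge (w p.2) (w p.1) with hlt2|hle
  · exact Finset.mem_insert_of_mem (mem_Invs.mpr ⟨hlt, hlt2⟩)
  · have hne : w p.1 ≠ w p.2 := fun he => (Fin.ne_of_lt hlt) (w.injective he)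
    have hlt2 : w p.1 < w p.2 := lt_of_le_of_ne hle hne
    obtain ⟨h1, h2⟩ := swap_antimono hjk hlt2 hinv
    have hp : p = (w⁻¹ j, w⁻¹ k) := by
      rw [Prod.ext_iff]
      exact ⟨by simp [← h1], by simp [← h2]⟩
    rw [hp]
    exact Finset.mem_insert_self _ _

lemma invn_swap_mul_le {j k : Fin n} (hjk : (k:ℕ)=(j:ℕ)+1) (w : Perm (Fin n)) :
    invn (swap j k * w) ≤ invn w + 1 :=
  le_trans (Finset.card_le_card (Invs_swap_mul_subset hjk w)) (Finset.card_insert_le _ _)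

lemma invn_swap_mul_lt {j k : Fin n} (hjk : (k:ℕ)=(j:ℕ)+1) {w : Perm (Fin n)}
    (hd : w⁻¹ k < w⁻¹ j) : invn (swap j k * w) < invn w := by
  have hjk' : j < k := by rw [Fin.lt_iff_val_lt_val]; omega
  apply Finset.card_lt_card
  constructor
  · intro p hp
    have hp' := Invs_swap_mul_subset hjk w hp
    rcases Finset.mem_insert.mp hp' with h|h
    · exfalso
      rw [mem_Invs] at hp
      rw [h] at hp
      exact absurd hp.1 (not_lt.mpr hd.le)
    · exact h
  · rw [Finset.not_subset]
    refine ⟨(w⁻¹ k, w⁻¹ j), mem_Invs.mpr ⟨hd, by simp [hjk']⟩, ?_⟩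
    rw [mem_Invs]
    push_neg
    intro _
    simp only [Perm.mul_apply, Perm.coe_inv, Equiv.apply_symm_apply, swap_apply_left, swap_apply_right]
    exact hjk'.le

lemma invn_mul_swap_lt {j k : Fin n} (hjk : (k:ℕ)=(j:ℕ)+1) {w : Perm (Fin n)}
    (hd : w k < w j) : invn (w * swap j k) < invn w := by
  have hjk' : j < k := by rw [Fin.lt_iff_val_lt_val]; omega
  have hjkmem : (j, k) ∈ Invs w := mem_Invs.mpr ⟨hjk', hd⟩
  have hmaps : ∀ p ∈ Invs (w * swap j k),
      (swap j k p.1, swap j k p.2) ∈ (Invs w).erase (j, k) := by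
    intro p hp
    rw [mem_Invs] at hp
    obtain ⟨hlt, hinv⟩ := hp
    simp only [Perm.mul_apply] at hinv
    have hpne : ¬(p.1 = j ∧ p.2 = k) := by
      rintro ⟨h1, h2⟩
      rw [h1, h2, swap_apply_left, swap_apply_right] at hinv
      exact absurd hinv (not_lt.mpr hd.le)
    rw [Finset.mem_erase]
    constructor
    · intro hpq
      rw [Prod.ext_iff] at hpq
      obtain ⟨h1, h2⟩ := hpq
      have h1' : p.1 = k := by
        have := congrArg (swap j k) h1
        simpa using this
      have h2' : p.2 = j := by
        have := congrArg (swap j k) h2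
        simpa using this
      rw [h1', h2'] at hlt
      exact absurd hlt (not_lt.mpr hjk'.le)
    · exact mem_Invs.mpr ⟨swap_mono hjk hlt hpne, hinv⟩
  have hinj : Set.InjOn (fun p : Fin n × Fin n => (swap j k p.1, swap j k p.2)) (Invs (w * swap j k)) := by
    intro p _ q _ h
    rw [Prod.ext_iff] at h ⊢
    exact ⟨(swap j k).injective h.1, (swap j k).injective h.2⟩
  calc invn (w * swap j k) ≤ ((Invs w).erase (j,k)).card :=
        Finset.card_le_card_of_injOn _ hmaps hinj
    _ < invn w := Finset.card_erase_lt_of_mem hjkmem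

lemma exists_word : ∀ (w : Perm (Fin n)), ∃ l : List (Perm (Fin n)),
    (∀ σ ∈ l, ∃ j k : Fin n, (k:ℕ)=(j:ℕ)+1 ∧ σ = swap j k) ∧ l.length ≤ invn w ∧ l.prod = w := by
  suffices h : ∀ m (w : Perm (Fin n)), invn w = m → ∃ l : List (Perm (Fin n)),
      (∀ σ ∈ l, ∃ j k : Fin n, (k:ℕ)=(j:ℕ)+1 ∧ σ = swap j k) ∧ l.length ≤ invn w ∧ l.prod = w by
    exact fun w => h _ w rfl
  intro m
  induction m using Nat.strong_induction_on with
  | _ m ih =>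
  intro w hw
  rcases eq_or_ne w 1 with rfl|hne
  · exact ⟨[], by simp⟩
  obtain ⟨j, k, hjk, hd⟩ := exists_descent hne
  have hlt := invn_mul_swap_lt hjk hd
  obtain ⟨l, hl1, hl2, hl3⟩ := ih (invn (w * swap j k)) (hw ▸ hlt) _ rfl
  refine ⟨l ++ [swap j k], ?_, ?_, ?_⟩
  · intro σ hσ
    rcases List.mem_append.mp hσ with h|h
    · exact hl1 σ h
    · simp at h
      exact ⟨j, k, hjk, h⟩
  · simp only [List.length_append, List.length_singleton]
    omega
  · rw [List.prod_append, hl3, List.prod_singleton, mul_assoc, swap_mul_self, mul_one]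


-- ### Section 2: the length formula
variable {r n : ℕ}

/-- the "t-weight" of an element -/
def tval (g : Grn r n) : ℕ := ∑ i, (Multiplicative.toAdd g.left i).val

lemma act_apply (w : Perm (Fin n)) (f : Multiplicative (Fin n → ZMod r)) (i : Fin n) :
    Multiplicative.toAdd (act r n w f) i = Multiplicative.toAdd f (w⁻¹ i) := rfl

lemma tval_one : tval (1 : Grn r n) = 0 := by
  simp [tval, ZMod.val_zero]

lemma tval_inl_mul [NeZero r] (a : Multiplicative (Fin n → ZMod r)) (g : Grn r n) :
    tval (inl a * g) ≤ (∑ i, (Multiplicative.toAdd a i).val) + tval g := by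
  rw [tval, tval, ← Finset.sum_add_distrib]
  apply Finset.sum_le_sum
  intro i _
  have h : Multiplicative.toAdd ((inl a * g).left : Multiplicative (Fin n → ZMod r)) i
      = Multiplicative.toAdd a i + Multiplicative.toAdd g.left i := by
    rw [mul_left, left_inl, right_inl, map_one]
    rfl
  rw [h, ZMod.val_add]
  exact Nat.mod_le _ _

lemma tval_inr_mul (w : Perm (Fin n)) (g : Grn r n) : tval (inr w * g) = tval g := by
  rw [tval, tval]
  have h : ∀ i, Multiplicative.toAdd ((inr w * g).left : Multiplicative (Fin n → ZMod r)) i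
      = Multiplicative.toAdd g.left (w⁻¹ i) := by
    intro i
    rw [mul_left, left_inr, one_mul, right_inr]
    rfl
  simp only [h]
  exact Equiv.sum_comp (w⁻¹ : Equiv (Fin n) (Fin n))
    (fun i => (Multiplicative.toAdd g.left i).val)

lemma right_inr_mul (w : Perm (Fin n)) (g : Grn r n) : (inr w * g).right = w * g.right := by simp

lemma tGen_sum_val (hr : 2 ≤ r) (i : Fin n) :
    ∑ j, ((Pi.single i (1 : ZMod r) : Fin n → ZMod r) j).val = 1 := by
  rw [Finset.sum_eq_single_of_mem i (Finset.mem_univ i)]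
  · have : (1 : ZMod r).val = 1 := ZMod.val_one_eq_one_mod r ▸ Nat.mod_eq_of_lt (by omega)
    simpa using this
  · intro j _ hj
    simp [Pi.single_eq_of_ne hj, ZMod.val_zero]

lemma L_word_le (hr : 2 ≤ r) : ∀ l : List (Grn r n), (∀ x ∈ l, x ∈ PiSet r n) →
    tval l.prod + invn (l.prod).right ≤ l.length := by
  have : NeZero r := ⟨by omega⟩
  intro l
  induction l with
  | nil =>
    intro _
    simp [tval_one, invn_one]
  | cons x l ih =>
    intro hx
    have hrest := ih (fun y hy => hx y (List.mem_cons_of_mem _ hy))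
    rw [List.prod_cons]
    rcases hx x (List.mem_cons_self) with ⟨i, rfl⟩ | ⟨i, j, hij, rfl⟩
    · have h1 : tval (tGen r n i * l.prod) ≤ 1 + tval l.prod := by
        have h := tval_inl_mul (Multiplicative.ofAdd (Pi.single i (1 : ZMod r))) l.prod
        rw [show (∑ k, (Multiplicative.toAdd
            (Multiplicative.ofAdd (Pi.single i (1 : ZMod r)) :
              Multiplicative (Fin n → ZMod r)) k).val) = 1 from tGen_sum_val hr i] at h
        exact h
      have h2 : (tGen r n i * l.prod).right = l.prod.right := by
        rw [tGen, mul_right, right_inl, one_mul]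
      rw [h2, List.length_cons]
      omega
    · have h1 : tval (sGen r n i j * l.prod) = tval l.prod := tval_inr_mul _ _
      have h2 : (sGen r n i j * l.prod).right = swap i j * l.prod.right := by
        rw [sGen, mul_right, right_inr]
      have h3 := invn_swap_mul_le hij (l.prod.right)
      rw [List.length_cons, h1, h2]
      omega

lemma exists_tword [NeZero r] (s : Finset (Fin n)) (f : Fin n → ZMod r) :
    ∃ l : List (Grn r n), (∀ x ∈ l, ∃ i ∈ s, f i ≠ 0 ∧ x = tGen r n i) ∧
      l.length = ∑ i ∈ s, (f i).val ∧
      l.prod = inl (Multiplicative.ofAdd (∑ i ∈ s, Pi.single i (f i))) := by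
  induction s using Finset.induction with
  | empty => exact ⟨[], by simp⟩
  | @insert a s ha ih =>
    obtain ⟨l, h1, h2, h3⟩ := ih
    refine ⟨List.replicate (f a).val (tGen r n a) ++ l, ?_, ?_, ?_⟩
    · intro x hx
      rcases List.mem_append.mp hx with h|h
      · have hx' := List.eq_of_mem_replicate h
        have hval : (f a).val ≠ 0 := by
          intro h0
          rw [h0] at h
          simp at h
        refine ⟨a, Finset.mem_insert_self _ _, ?_, hx'⟩
        intro h0
        rw [h0, ZMod.val_zero] at hval
        exact hval rfl
      · obtain ⟨i, his, hfi, hxi⟩ := h1 x h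
        exact ⟨i, Finset.mem_insert_of_mem his, hfi, hxi⟩
    · simp [h2, Finset.sum_insert ha]
    · rw [List.prod_append, h3, List.prod_replicate, Finset.sum_insert ha, tGen,
        ← map_pow, ← map_mul]
      congr 1
      have hsingle : (f a).val • (Pi.single a (1 : ZMod r) : Fin n → ZMod r)
          = Pi.single a (f a) := by
        ext j
        rcases eq_or_ne j a with rfl|hj
        · rw [Pi.smul_apply, Pi.single_eq_same, Pi.single_eq_same, nsmul_eq_mul, mul_one]
          exact ZMod.natCast_rightInverse (f j)
        · rw [Pi.smul_apply, Pi.single_eq_of_ne hj, Pi.single_eq_of_ne hj, smul_zero]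
      rw [← ofAdd_nsmul, hsingle, ← ofAdd_add]

lemma exists_full_word (hr : 2 ≤ r) (g : Grn r n) :
    ∃ l : List (Grn r n), (∀ x ∈ l, x ∈ PiSet r n) ∧
      l.length ≤ tval g + invn g.right ∧ l.prod = g := by
  have : NeZero r := ⟨by omega⟩
  obtain ⟨lt, ht1, ht2, ht3⟩ := exists_tword Finset.univ (Multiplicative.toAdd g.left)
  obtain ⟨lw, hw1, hw2, hw3⟩ := exists_word g.right
  refine ⟨lt ++ lw.map (inr : Perm (Fin n) →* Grn r n), ?_, ?_, ?_⟩
  · intro x hx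
    rcases List.mem_append.mp hx with h|h
    · obtain ⟨i, _, _, rfl⟩ := ht1 x h
      exact Or.inl ⟨i, rfl⟩
    · obtain ⟨σ, hσ, rfl⟩ := List.mem_map.mp h
      obtain ⟨j, k, hjk, rfl⟩ := hw1 σ hσ
      exact Or.inr ⟨j, k, hjk, rfl⟩
  · rw [List.length_append, List.length_map, ht2]
    have : (∑ i, (Multiplicative.toAdd g.left i).val) = tval g := rfl
    omega
  · rw [List.prod_append, ht3, ← MonoidHom.map_list_prod, hw3, Finset.univ_sum_single]
    exact inl_left_mul_inr_right g

lemma len_eq (hr : 2 ≤ r) (g : Grn r n) : len r n g = tval g + invn g.right := by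
  obtain ⟨l, h1, h2, h3⟩ := exists_full_word hr g
  apply le_antisymm
  · exact le_trans (Nat.sInf_le ⟨l, rfl, h1, h3⟩) h2
  · have hne : {k | ∃ l : List (Grn r n), l.length = k ∧ (∀ x ∈ l, x ∈ PiSet r n) ∧
        l.prod = g}.Nonempty := ⟨l.length, l, rfl, h1, h3⟩
    obtain ⟨l', hl'1, hl'2, hl'3⟩ := Nat.sInf_mem hne
    calc tval g + invn g.right = tval l'.prod + invn (l'.prod).right := by rw [hl'3]
      _ ≤ l'.length := L_word_le hr l' hl'2
      _ = len r n g := hl'1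
-- ### Section 3: blocks of a signed composition

/-- the index of the block containing position `j` -/
noncomputable def blk (μ : List ℤ) (j : ℕ) : ℕ := sInf {i | j < absPrefix μ (i+1)}

lemma absPrefix_zero (μ : List ℤ) : absPrefix μ 0 = 0 := rfl

lemma absPrefix_succ (μ : List ℤ) {i : ℕ} (h : i < μ.length) :
    absPrefix μ (i+1) = absPrefix μ i + (μ.getD i 0).natAbs := by
  rw [absPrefix, absPrefix, List.take_succ, List.map_append, List.sum_append]
  have : μ[i]? = some μ[i] := List.getElem?_eq_getElem h
  rw [this]
  simp [List.getD_eq_getElem?_getD, this]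

lemma absPrefix_of_le (μ : List ℤ) {i : ℕ} (h : μ.length ≤ i) :
    absPrefix μ i = absPrefix μ μ.length := by
  rw [absPrefix, absPrefix, List.take_of_length_le h, List.take_length]

lemma absPrefix_mono (μ : List ℤ) : Monotone (absPrefix μ) := by
  apply monotone_nat_of_le_succ
  intro i
  rcases lt_or_ge i μ.length with h|h
  · rw [absPrefix_succ μ h]
    omega
  · rw [absPrefix_of_le μ h, absPrefix_of_le μ (i := i+1) (by omega)]

lemma absPrefix_length {n : ℕ} {μ : List ℤ} (hμ : IsSignedComp n μ) :
    absPrefix μ μ.length = n := by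
  rw [absPrefix, List.take_length]
  exact hμ.2

lemma lt_absPrefix_blk_succ {n : ℕ} {μ : List ℤ} (hμ : IsSignedComp n μ) {j : ℕ} (hj : j < n) :
    j < absPrefix μ (blk μ j + 1) := by
  have hmem : μ.length ∈ {i | j < absPrefix μ (i+1)} := by
    simp only [Set.mem_setOf_eq]
    rw [absPrefix_of_le μ (by omega), absPrefix_length hμ]
    exact hj
  exact Nat.sInf_mem ⟨μ.length, hmem⟩

lemma absPrefix_blk_le (μ : List ℤ) (j : ℕ) : absPrefix μ (blk μ j) ≤ j := by
  cases hb : blk μ j with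
  | zero => rw [absPrefix_zero]; omega
  | succ i =>
    have h2 : i < blk μ j := by omega
    rw [blk] at h2
    have h3 : i ∉ {i | j < absPrefix μ (i+1)} := Nat.notMem_of_lt_sInf h2
    simp only [Set.mem_setOf_eq, not_lt] at h3
    exact h3

lemma blk_lt_length {n : ℕ} {μ : List ℤ} (hμ : IsSignedComp n μ) (hn : 1 ≤ n)
    {j : ℕ} (hj : j < n) : blk μ j < μ.length := by
  have hlen : μ.length ≠ 0 := by
    intro h0
    have := absPrefix_length hμ
    rw [h0, absPrefix_zero] at this
    omega
  have hmem : (μ.length - 1) ∈ {i | j < absPrefix μ (i+1)} := by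
    simp only [Set.mem_setOf_eq]
    rw [show μ.length - 1 + 1 = μ.length by omega, absPrefix_length hμ]
    exact hj
  have h2 : blk μ j ≤ μ.length - 1 := Nat.sInf_le hmem
  omega

lemma blk_eq_of {n : ℕ} {μ : List ℤ} (hμ : IsSignedComp n μ) {i j : ℕ}
    (h1 : absPrefix μ i ≤ j) (h2 : j < absPrefix μ (i+1)) : blk μ j = i := by
  have hub : blk μ j ≤ i := Nat.sInf_le h2
  have h3 : j < absPrefix μ (blk μ j + 1) :=
    Nat.sInf_mem (⟨i, h2⟩ : Set.Nonempty {i | j < absPrefix μ (i+1)})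
  rcases lt_or_eq_of_le hub with hlt|heq
  · have h4 : absPrefix μ (blk μ j + 1) ≤ absPrefix μ i := absPrefix_mono μ (by omega)
    omega
  · exact heq

lemma blk_mono {n : ℕ} {μ : List ℤ} (hμ : IsSignedComp n μ) {j j' : ℕ}
    (hj' : j' < n) (h : j ≤ j') : blk μ j ≤ blk μ j' := by
  by_contra hc
  push_neg at hc
  have h1 : j' < absPrefix μ (blk μ j' + 1) := lt_absPrefix_blk_succ hμ hj'
  have h2 : absPrefix μ (blk μ j' + 1) ≤ absPrefix μ (blk μ j) := absPrefix_mono μ (by omega)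
  have h3 : absPrefix μ (blk μ j) ≤ j := absPrefix_blk_le μ j
  omega

lemma lt_of_blk_lt {n : ℕ} {μ : List ℤ} (hμ : IsSignedComp n μ) {j j' : ℕ}
    (hj : j < n) (_hj' : j' < n) (h : blk μ j < blk μ j') : j < j' := by
  by_contra hc
  push_neg at hc
  exact absurd (blk_mono hμ hj hc) (by omega)

lemma blk_sandwich {n : ℕ} {μ : List ℤ} (hμ : IsSignedComp n μ) {x y z : ℕ}
    (hy : y < n) (h1 : x ≤ z) (h2 : z ≤ y) (h : blk μ x = blk μ y) : blk μ z = blk μ x := by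
  have l1 := blk_mono hμ (show z < n by omega) h1
  have l2 := blk_mono hμ hy h2
  omega
-- ### Section 3b: W, D0, and the structure of `G_μ`

/-- block-preserving permutations -/
def Wset (μ : List ℤ) : Set (Perm (Fin n)) :=
  {w | ∀ x : Fin n, blk μ ((w x : Fin n) : ℕ) = blk μ (x : ℕ)}

/-- minimal coset representatives -/
def D0 (μ : List ℤ) : Set (Perm (Fin n)) :=
  {d | ∀ a b : Fin n, a < b → blk μ ((d a : Fin n) : ℕ) = blk μ ((d b : Fin n) : ℕ) → d a < d b}

/-- position `j` lies in a positive block -/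
def inP (μ : List ℤ) (j : Fin n) : Prop := 0 < μ.getD (blk μ (j : ℕ)) 0

lemma Wset.one_mem (μ : List ℤ) : (1 : Perm (Fin n)) ∈ Wset μ := fun _ => rfl

lemma Wset.mul_mem {μ : List ℤ} {u v : Perm (Fin n)} (hu : u ∈ Wset μ) (hv : v ∈ Wset μ) :
    u * v ∈ Wset μ := fun x => by
  rw [Perm.mul_apply, hu (v x), hv x]

lemma Wset.inv_mem {μ : List ℤ} {u : Perm (Fin n)} (hu : u ∈ Wset μ) : u⁻¹ ∈ Wset μ := fun x => by
  have := hu (u⁻¹ x)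
  rw [Perm.coe_inv, Equiv.apply_symm_apply] at this
  exact this.symm

lemma swap_mem_Wset {μ : List ℤ} {j k : Fin n} (h : blk μ (j:ℕ) = blk μ (k:ℕ)) :
    swap j k ∈ Wset μ := by
  intro x
  rcases eq_or_ne x j with rfl|hxj
  · rw [swap_apply_left]; exact h.symm
  rcases eq_or_ne x k with rfl|hxk
  · rw [swap_apply_right]; exact h
  · rw [swap_apply_of_ne_of_ne hxj hxk]

/-- the subgroup `T_P ⋊ S_{μ⁺}` -/
def HSub (μ : List ℤ) : Subgroup (Grn r n) where
  carrier := {g | (∀ j : Fin n, ¬ inP μ j → Multiplicative.toAdd g.left j = 0) ∧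
    g.right ∈ Wset μ}
  one_mem' := ⟨fun j _ => rfl, Wset.one_mem μ⟩
  mul_mem' := by
    rintro a b ⟨ha1, ha2⟩ ⟨hb1, hb2⟩
    refine ⟨?_, Wset.mul_mem ha2 hb2⟩
    intro j hj
    have h : Multiplicative.toAdd ((a*b).left : Multiplicative (Fin n → ZMod r)) j
        = Multiplicative.toAdd a.left j + Multiplicative.toAdd b.left (a.right⁻¹ j) := rfl
    rw [h, ha1 j hj, hb1 (a.right⁻¹ j) ?_, add_zero]
    intro hP
    apply hj
    rw [inP, ← Wset.inv_mem ha2 j]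
    exact hP
  inv_mem' := by
    rintro a ⟨ha1, ha2⟩
    refine ⟨?_, Wset.inv_mem ha2⟩
    intro j hj
    have h : Multiplicative.toAdd (a⁻¹.left : Multiplicative (Fin n → ZMod r)) j
        = - Multiplicative.toAdd a.left (a.right j) := rfl
    rw [h, ha1 (a.right j) ?_, neg_zero]
    intro hP
    apply hj
    rw [inP, ← ha2 j]
    exact hP

lemma tGen_injective (hr : 2 ≤ r) {i j : Fin n} (h : tGen r n i = tGen r n j) : i = j := by
  by_contra hne
  have h1 := congrArg (fun g : Grn r n => Multiplicative.toAdd g.left i) h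
  simp only [tGen, left_inl, toAdd_ofAdd] at h1
  rw [Pi.single_eq_same, Pi.single_eq_of_ne hne] at h1
  have : NeZero r := ⟨by omega⟩
  have h2 := congrArg ZMod.val h1
  rw [ZMod.val_zero] at h2
  have : (1 : ZMod r).val = 1 := ZMod.val_one_eq_one_mod r ▸ Nat.mod_eq_of_lt (by omega)
  omega

lemma tGen_ne_sGen {i j k : Fin n} (hjk : (k:ℕ) = (j:ℕ)+1) : tGen r n i ≠ sGen r n j k := by
  intro h
  have h1 := congrArg (fun g : Grn r n => g.right) h
  simp only [tGen, sGen, right_inl, right_inr] at h1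
  have hne : j ≠ k := fun he => by rw [he] at hjk; omega
  exact hne (swap_eq_one_iff.mp h1.symm)

lemma sGen_injective {j k j' k' : Fin n} (hjk : (k:ℕ) = (j:ℕ)+1) (hjk' : (k':ℕ) = (j':ℕ)+1)
    (h : sGen r n j k = sGen r n j' k') : j = j' ∧ k = k' := by
  have h1 : swap j k = swap j' k' := by
    have := congrArg (fun g : Grn r n => g.right) h
    simpa [sGen] using this
  have h2 : swap j k j' = k' := by rw [h1, swap_apply_left]
  rcases eq_or_ne j' j with rfl|hj
  · rw [swap_apply_left] at h2
    exact ⟨rfl, h2⟩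
  rcases eq_or_ne j' k with rfl|hk
  · rw [swap_apply_right] at h2
    exfalso
    have h3 := congrArg Fin.val h2
    omega
  · rw [swap_apply_of_ne_of_ne hj hk] at h2
    exfalso
    have h3 := congrArg Fin.val h2
    omega

lemma tGen_mem_PiMu_iff {μ : List ℤ} (hμ : IsSignedComp n μ) (hr : 2 ≤ r) (j : Fin n) :
    tGen r n j ∈ PiMu r n μ ↔ inP μ j := by
  constructor
  · rintro (⟨j', ⟨i, hi1, hi2, hi3, hi4⟩, heq⟩ | ⟨j', k', hadj, _, heq⟩)
    · have hj : j = j' := tGen_injective hr heq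
      subst hj
      have : blk μ (j : ℕ) = i := blk_eq_of hμ hi3 hi4
      rw [inP, this]
      exact hi2
    · exact absurd heq (tGen_ne_sGen hadj)
  · intro hP
    exact Or.inl ⟨j, ⟨blk μ (j:ℕ), blk_lt_length hμ (by have := j.isLt; omega) j.isLt, hP,
      absPrefix_blk_le μ (j:ℕ), lt_absPrefix_blk_succ hμ j.isLt⟩, rfl⟩

lemma sGen_mem_PiMu_iff {μ : List ℤ} (hμ : IsSignedComp n μ) {j k : Fin n}
    (hjk : (k:ℕ) = (j:ℕ)+1) :
    sGen r n j k ∈ PiMu r n μ ↔ blk μ (j:ℕ) = blk μ (k:ℕ) := by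
  constructor
  · rintro (⟨j', _, heq⟩ | ⟨j', k', hadj, ⟨i, hi1, hi2, hi3⟩, heq⟩)
    · exact absurd heq.symm (tGen_ne_sGen hjk)
    · obtain ⟨hj, hk⟩ := sGen_injective hjk hadj heq
      subst hj; subst hk
      have h1 : blk μ (j:ℕ) = i := blk_eq_of hμ hi2 (by omega)
      have h2 : blk μ (k:ℕ) = i := blk_eq_of hμ (by omega) hi3
      rw [h1, h2]
  · intro hB
    refine Or.inr ⟨j, k, hjk, ⟨blk μ (j:ℕ), blk_lt_length hμ (by have := j.isLt; omega) j.isLt,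
      absPrefix_blk_le μ (j:ℕ), ?_⟩, rfl⟩
    rw [hB]
    exact lt_absPrefix_blk_succ hμ k.isLt

lemma PiMu_subset_HSub {μ : List ℤ} (hμ : IsSignedComp n μ) :
    PiMu r n μ ⊆ (HSub μ : Subgroup (Grn r n)) := by
  rintro x (⟨j, ⟨i, hi1, hi2, hi3, hi4⟩, rfl⟩ | ⟨j, k, hjk, ⟨i, hi1, hi2, hi3⟩, rfl⟩)
  · have hPj : inP μ j := by
      rw [inP, blk_eq_of hμ hi3 hi4]
      exact hi2
    constructor
    · intro j' hj'
      have hne : j' ≠ j := fun he => hj' (he ▸ hPj)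
      show (Pi.single j (1 : ZMod r) : Fin n → ZMod r) j' = 0
      exact Pi.single_eq_of_ne hne _
    · show (1 : Perm (Fin n)) ∈ Wset μ
      exact Wset.one_mem μ
  · constructor
    · intro j' _
      rfl
    · show swap j k ∈ Wset μ
      apply swap_mem_Wset
      rw [blk_eq_of hμ hi2 (show (j:ℕ) < absPrefix μ (i+1) by omega),
        blk_eq_of hμ (show absPrefix μ i ≤ (k:ℕ) by omega) hi3]
-- ### Section 3c: generation of `G_μ` and coset decompositions

lemma blk_eq_of_adj_descent {μ : List ℤ} (hμ : IsSignedComp n μ) {w : Perm (Fin n)}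
    (hw : w ∈ Wset μ) {j k : Fin n} (hjk : (k:ℕ) = (j:ℕ)+1) (hd : w k < w j) :
    blk μ (j:ℕ) = blk μ (k:ℕ) := by
  have h1 : blk μ ((w k : Fin n):ℕ) ≤ blk μ ((w j : Fin n):ℕ) :=
    blk_mono hμ (w j).isLt (le_of_lt (Fin.lt_iff_val_lt_val.mp hd))
  have h2 : blk μ (j:ℕ) ≤ blk μ (k:ℕ) := blk_mono hμ k.isLt (by omega)
  rw [hw j, hw k] at h1
  omega

lemma exists_blockword {μ : List ℤ} (hμ : IsSignedComp n μ) :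
    ∀ w ∈ Wset μ, ∃ l : List (Perm (Fin n)),
      (∀ σ ∈ l, ∃ j k : Fin n, (k:ℕ) = (j:ℕ)+1 ∧ blk μ (j:ℕ) = blk μ (k:ℕ) ∧ σ = swap j k) ∧
      l.prod = w := by
  suffices h : ∀ m, ∀ w ∈ Wset μ, invn w = m → ∃ l : List (Perm (Fin n)),
      (∀ σ ∈ l, ∃ j k : Fin n, (k:ℕ) = (j:ℕ)+1 ∧ blk μ (j:ℕ) = blk μ (k:ℕ) ∧ σ = swap j k) ∧
      l.prod = w by
    exact fun w hw => h _ w hw rfl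
  intro m
  induction m using Nat.strong_induction_on with
  | _ m ih =>
  intro w hw hm
  rcases eq_or_ne w 1 with rfl|hne
  · exact ⟨[], by simp⟩
  obtain ⟨j, k, hjk, hd⟩ := exists_descent hne
  have hblk : blk μ (j:ℕ) = blk μ (k:ℕ) := blk_eq_of_adj_descent hμ hw hjk hd
  have hw' : w * swap j k ∈ Wset μ :=
    Wset.mul_mem hw (swap_mem_Wset hblk)
  have hlt := invn_mul_swap_lt hjk hd
  obtain ⟨l, hl1, hl2⟩ := ih (invn (w * swap j k)) (hm ▸ hlt) _ hw' rfl
  refine ⟨l ++ [swap j k], ?_, ?_⟩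
  · intro σ hσ
    rcases List.mem_append.mp hσ with h|h
    · exact hl1 σ h
    · simp at h
      exact ⟨j, k, hjk, hblk, h⟩
  · rw [List.prod_append, hl2, List.prod_singleton, mul_assoc, swap_mul_self, mul_one]

lemma inr_mem_Gmu {μ : List ℤ} (hμ : IsSignedComp n μ) {w : Perm (Fin n)}
    (hw : w ∈ Wset μ) : (inr w : Grn r n) ∈ Gmu r n μ := by
  obtain ⟨l, hl1, hl2⟩ := exists_blockword hμ w hw
  have : (inr w : Grn r n) = (l.map (inr : Perm (Fin n) →* Grn r n)).prod := by
    rw [← MonoidHom.map_list_prod, hl2]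
  rw [this]
  apply Subgroup.list_prod_mem
  intro x hx
  obtain ⟨σ, hσ, rfl⟩ := List.mem_map.mp hx
  obtain ⟨j, k, hjk, hblk, rfl⟩ := hl1 σ hσ
  exact Subgroup.subset_closure ((sGen_mem_PiMu_iff hμ hjk).mpr hblk)

lemma inl_mem_Gmu (hr : 2 ≤ r) {μ : List ℤ} (hμ : IsSignedComp n μ)
    {f : Fin n → ZMod r} (hf : ∀ j : Fin n, ¬ inP μ j → f j = 0) :
    (inl (Multiplicative.ofAdd f) : Grn r n) ∈ Gmu r n μ := by
  have : NeZero r := ⟨by omega⟩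
  obtain ⟨l, hl1, _, hl3⟩ := exists_tword Finset.univ f
  rw [Finset.univ_sum_single] at hl3
  rw [← hl3]
  apply Subgroup.list_prod_mem
  intro x hx
  obtain ⟨i, _, hfi, rfl⟩ := hl1 x hx
  apply Subgroup.subset_closure
  rw [tGen_mem_PiMu_iff hμ hr]
  by_contra hP
  exact hfi (hf i hP)

lemma mem_Gmu_iff (hr : 2 ≤ r) {μ : List ℤ} (hμ : IsSignedComp n μ) {g : Grn r n} :
    g ∈ Gmu r n μ ↔ (∀ j : Fin n, ¬ inP μ j → Multiplicative.toAdd g.left j = 0) ∧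
      g.right ∈ Wset μ := by
  constructor
  · intro hg
    exact (Subgroup.closure_le (HSub μ)).mpr (PiMu_subset_HSub hμ) hg
  · rintro ⟨h1, h2⟩
    rw [← inl_left_mul_inr_right g]
    have hl : (inl g.left : Grn r n) ∈ Gmu r n μ := by
      have : g.left = Multiplicative.ofAdd (Multiplicative.toAdd g.left) := rfl
      rw [this]
      exact inl_mem_Gmu hr hμ h1
    exact Subgroup.mul_mem _ hl (inr_mem_Gmu hμ h2)

lemma tGen_mem_Gmu_iff (hr : 2 ≤ r) {μ : List ℤ} (hμ : IsSignedComp n μ) (j : Fin n) :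
    tGen r n j ∈ Gmu r n μ ↔ inP μ j := by
  rw [mem_Gmu_iff hr hμ]
  constructor
  · rintro ⟨h1, _⟩
    by_contra hP
    have hval := h1 j hP
    have h2 : Multiplicative.toAdd ((tGen r n j).left : Multiplicative (Fin n → ZMod r)) j
        = (1 : ZMod r) := by
      show (Pi.single j (1 : ZMod r) : Fin n → ZMod r) j = 1
      exact Pi.single_eq_same j 1
    rw [h2] at hval
    have : NeZero r := ⟨by omega⟩
    have h3 := congrArg ZMod.val hval
    have h4 : (1 : ZMod r).val = 1 := ZMod.val_one_eq_one_mod r ▸ Nat.mod_eq_of_lt (by omega)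
    rw [ZMod.val_zero, h4] at h3
    omega
  · intro hP
    constructor
    · intro j' hj'
      have hne : j' ≠ j := fun he => hj' (he ▸ hP)
      show (Pi.single j (1 : ZMod r) : Fin n → ZMod r) j' = 0
      exact Pi.single_eq_of_ne hne _
    · exact Wset.one_mem μ

-- ### Tneg characterization

lemma mem_Tneg_iff (hr : 2 ≤ r) {μ : List ℤ} (hμ : IsSignedComp n μ) (x : Grn r n) :
    x ∈ Tneg r n μ ↔ x.right = 1 ∧ ∀ j : Fin n, inP μ j → Multiplicative.toAdd x.left j = 0 := by
  have : NeZero r := ⟨by omega⟩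
  constructor
  · intro hx
    refine Subgroup.closure_induction ?_ ⟨rfl, fun j _ => rfl⟩ ?_ ?_ hx
    · rintro y ⟨i, hi, rfl⟩
      rw [tGen_mem_Gmu_iff hr hμ] at hi
      refine ⟨rfl, ?_⟩
      intro j hj
      have hne : j ≠ i := fun he => hi (he ▸ hj)
      show (Pi.single i (1 : ZMod r) : Fin n → ZMod r) j = 0
      exact Pi.single_eq_of_ne hne _
    · rintro a b _ _ ⟨ha1, ha2⟩ ⟨hb1, hb2⟩
      refine ⟨by rw [mul_right, ha1, hb1, mul_one], ?_⟩
      intro j hj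
      have h : Multiplicative.toAdd ((a*b).left : Multiplicative (Fin n → ZMod r)) j
          = Multiplicative.toAdd a.left j + Multiplicative.toAdd b.left (a.right⁻¹ j) := rfl
      rw [h, ha2 j hj, ha1, zero_add]
      have h2 : ((1 : Perm (Fin n))⁻¹ j) = j := rfl
      rw [h2, hb2 j hj]
    · rintro a _ ⟨ha1, ha2⟩
      refine ⟨by rw [inv_right, ha1, inv_one], ?_⟩
      intro j hj
      have h : Multiplicative.toAdd (a⁻¹.left : Multiplicative (Fin n → ZMod r)) j
          = - Multiplicative.toAdd a.left (a.right j) := rfl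
      rw [h, ha1]
      have h2 : ((1 : Perm (Fin n)) j) = j := rfl
      rw [h2, ha2 j hj, neg_zero]
  · rintro ⟨hx1, hx2⟩
    have hxeq : x = inl x.left := by
      ext
      · rfl
      · rw [right_inl, hx1]
    obtain ⟨l, hl1, _, hl3⟩ := exists_tword Finset.univ (Multiplicative.toAdd x.left)
    rw [Finset.univ_sum_single] at hl3
    rw [hxeq]
    have hpe : (inl x.left : Grn r n) = l.prod := hl3.symm
    rw [hpe]
    apply Subgroup.list_prod_mem
    intro y hy
    obtain ⟨i, _, hfi, rfl⟩ := hl1 y hy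
    apply Subgroup.subset_closure
    refine ⟨i, ?_, rfl⟩
    rw [tGen_mem_Gmu_iff hr hμ]
    exact fun hP => hfi (hx2 i hP)
-- ### Section 3d: theory of minimal coset representatives `D0`

lemma blk_mono' {μ : List ℤ} (hμ : IsSignedComp n μ) {a b : Fin n} (h : a ≤ b) :
    blk μ (a:ℕ) ≤ blk μ (b:ℕ) :=
  blk_mono hμ b.isLt (Fin.le_iff_val_le_val.mp h)

lemma lt_of_blk_lt' {μ : List ℤ} (hμ : IsSignedComp n μ) {a b : Fin n}
    (h : blk μ (a:ℕ) < blk μ (b:ℕ)) : a < b := by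
  rw [Fin.lt_iff_val_lt_val]
  exact lt_of_blk_lt hμ a.isLt b.isLt h

lemma one_mem_D0 (μ : List ℤ) : (1 : Perm (Fin n)) ∈ D0 μ := fun a b hab _ => hab

lemma D0.inv_lt {μ : List ℤ} {d : Perm (Fin n)} (hd : d ∈ D0 μ) {x y : Fin n}
    (hxy : x < y) (hblk : blk μ (x:ℕ) = blk μ (y:ℕ)) : d⁻¹ x < d⁻¹ y := by
  rcases lt_trichotomy (d⁻¹ x) (d⁻¹ y) with h|h|h
  · exact h
  · exact absurd (d⁻¹.injective h) (by
      intro he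
      rw [he] at hxy
      exact lt_irrefl _ hxy)
  · exfalso
    have := hd (d⁻¹ y) (d⁻¹ x) h (by rw [Perm.coe_inv, Equiv.apply_symm_apply, Equiv.apply_symm_apply]; exact hblk.symm)
    rw [Perm.coe_inv, Equiv.apply_symm_apply, Equiv.apply_symm_apply] at this
    exact lt_asymm hxy this

lemma Wset.inversion_same_blk {μ : List ℤ} (hμ : IsSignedComp n μ) {u : Perm (Fin n)}
    (hu : u ∈ Wset μ) {x y : Fin n} (hxy : x < y) (hinv : u y < u x) :
    blk μ (x:ℕ) = blk μ (y:ℕ) := by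
  have h1 : blk μ ((u y : Fin n):ℕ) ≤ blk μ ((u x : Fin n):ℕ) := blk_mono' hμ hinv.le
  rw [hu x, hu y] at h1
  exact le_antisymm (blk_mono' hμ hxy.le) h1

lemma exists_D0_descent {μ : List ℤ} (hμ : IsSignedComp n μ) {w : Perm (Fin n)}
    (hw : w ∉ D0 μ) : ∃ j k : Fin n, (k:ℕ) = (j:ℕ)+1 ∧ blk μ (j:ℕ) = blk μ (k:ℕ) ∧
      w⁻¹ k < w⁻¹ j := by
  rw [D0, Set.mem_setOf_eq] at hw
  push_neg at hw
  obtain ⟨a, b, hab, hblk, hge⟩ := hw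
  have hne : w a ≠ w b := fun he => (Fin.ne_of_lt hab) (w.injective he)
  have hlt : ((w b : Fin n):ℕ) < ((w a : Fin n):ℕ) :=
    Fin.lt_iff_val_lt_val.mp (lt_of_le_of_ne hge (fun he => hne he.symm))
  by_contra hc
  push_neg at hc
  have hchain : ∀ m : ℕ, ∀ hle : ((w b : Fin n):ℕ) + m ≤ ((w a : Fin n):ℕ),
      b ≤ w⁻¹ ⟨((w b : Fin n):ℕ) + m, by have := (w a).isLt; omega⟩ := by
    intro m
    induction m with
    | zero =>
      intro h
      have he : (⟨((w b : Fin n):ℕ) + 0, by have := (w a).isLt; omega⟩ : Fin n) = w b :=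
        Fin.ext (by simp)
      rw [he, Perm.coe_inv, Equiv.symm_apply_apply]
    | succ m ihm =>
      intro h
      have hj : ((w b : Fin n):ℕ) + m < n := by have := (w a).isLt; omega
      have hk : ((w b : Fin n):ℕ) + (m+1) < n := by have := (w a).isLt; omega
      have hjk : ((⟨((w b : Fin n):ℕ) + (m+1), hk⟩ : Fin n) : ℕ)
          = ((⟨((w b : Fin n):ℕ) + m, hj⟩ : Fin n) : ℕ) + 1 := by simp; omega
      have e1 : blk μ (((w b : Fin n):ℕ) + m) = blk μ ((w b : Fin n):ℕ) :=
        blk_sandwich hμ (w a).isLt (by omega) (by omega) hblk.symm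
      have e2 : blk μ (((w b : Fin n):ℕ) + (m+1)) = blk μ ((w b : Fin n):ℕ) :=
        blk_sandwich hμ (w a).isLt (by omega) (by omega) hblk.symm
      have hblkjk : blk μ ((⟨((w b : Fin n):ℕ) + m, hj⟩ : Fin n) : ℕ)
          = blk μ ((⟨((w b : Fin n):ℕ) + (m+1), hk⟩ : Fin n) : ℕ) := by
        show blk μ (((w b : Fin n):ℕ) + m) = blk μ (((w b : Fin n):ℕ) + (m+1))
        rw [e1, e2]
      have hstep := hc _ _ hjk hblkjk
      exact le_trans (ihm (by omega)) hstep
  have hfin := hchain (((w a : Fin n):ℕ) - ((w b : Fin n):ℕ)) (by omega)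
  have he2 : (⟨((w b : Fin n):ℕ) + (((w a : Fin n):ℕ) - ((w b : Fin n):ℕ)),
      by have := (w a).isLt; omega⟩ : Fin n) = w a := Fin.ext (by simp; omega)
  rw [he2, Perm.coe_inv, Equiv.symm_apply_apply] at hfin
  exact absurd hfin (not_le.mpr hab)

lemma exists_D0_decomp {μ : List ℤ} (hμ : IsSignedComp n μ) (w : Perm (Fin n)) :
    ∃ u d : Perm (Fin n), u ∈ Wset μ ∧ d ∈ D0 μ ∧ w = u * d := by
  suffices h : ∀ m, ∀ w : Perm (Fin n), invn w = m →
      ∃ u d : Perm (Fin n), u ∈ Wset μ ∧ d ∈ D0 μ ∧ w = u * d by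
    exact h _ w rfl
  intro m
  induction m using Nat.strong_induction_on with
  | _ m ih =>
  intro w hm
  by_cases hw : w ∈ D0 μ
  · exact ⟨1, w, Wset.one_mem μ, hw, (one_mul w).symm⟩
  obtain ⟨j, k, hjk, hblk, hd⟩ := exists_D0_descent hμ hw
  have hlt := invn_swap_mul_lt hjk hd
  obtain ⟨u, d, hu, hd0, heq⟩ := ih (invn (swap j k * w)) (hm ▸ hlt) _ rfl
  refine ⟨swap j k * u, d, Wset.mul_mem (swap_mem_Wset hblk) hu, hd0, ?_⟩
  rw [mul_assoc, ← heq, ← mul_assoc, swap_mul_self, one_mul]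

lemma D0_unique_mul {μ : List ℤ} (hμ : IsSignedComp n μ) {v d : Perm (Fin n)}
    (hv : v ∈ Wset μ) (hd : d ∈ D0 μ) (hvd : v * d ∈ D0 μ) : v = 1 := by
  by_contra hne
  have hinv : invn v ≠ 0 := fun h0 => hne (eq_one_of_invn_eq_zero h0)
  have hcard : (Invs v).Nonempty := Finset.card_ne_zero.mp hinv
  obtain ⟨⟨x, y⟩, hmem⟩ := hcard
  rw [mem_Invs] at hmem
  obtain ⟨hxy, hvxy⟩ := hmem
  have hblk : blk μ (x:ℕ) = blk μ (y:ℕ) := Wset.inversion_same_blk hμ hv hxy hvxy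
  have hab : d⁻¹ x < d⁻¹ y := D0.inv_lt hd hxy hblk
  have happ : (v * d) (d⁻¹ x) = v x := by rw [Perm.mul_apply, Perm.coe_inv, Equiv.apply_symm_apply]
  have happ' : (v * d) (d⁻¹ y) = v y := by rw [Perm.mul_apply, Perm.coe_inv, Equiv.apply_symm_apply]
  have := hvd (d⁻¹ x) (d⁻¹ y) hab (by rw [happ, happ', hv x, hv y]; exact hblk)
  rw [happ, happ'] at this
  exact lt_asymm hvxy this

lemma invn_add_le_mul {μ : List ℤ} (hμ : IsSignedComp n μ) {u d : Perm (Fin n)}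
    (hu : u ∈ Wset μ) (hd : d ∈ D0 μ) : invn u + invn d ≤ invn (u * d) := by
  classical
  set φ : Fin n × Fin n → Fin n × Fin n := fun p => (d⁻¹ p.1, d⁻¹ p.2) with hφ
  have hA : Invs d ⊆ Invs (u * d) := by
    intro p hp
    rw [mem_Invs] at hp ⊢
    obtain ⟨h1, h2⟩ := hp
    refine ⟨h1, ?_⟩
    have hneq : blk μ ((d p.1 : Fin n):ℕ) ≠ blk μ ((d p.2 : Fin n):ℕ) := by
      intro he
      exact lt_asymm h2 (hd p.1 p.2 h1 he)
    have hle : blk μ ((d p.2 : Fin n):ℕ) ≤ blk μ ((d p.1 : Fin n):ℕ) := blk_mono' hμ h2.le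
    have hlt : blk μ ((d p.2 : Fin n):ℕ) < blk μ ((d p.1 : Fin n):ℕ) :=
      lt_of_le_of_ne hle (fun he => hneq he.symm)
    have : blk μ ((u (d p.2) : Fin n):ℕ) < blk μ ((u (d p.1) : Fin n):ℕ) := by
      rw [hu (d p.1), hu (d p.2)]
      exact hlt
    simp only [Perm.mul_apply]
    exact lt_of_blk_lt' hμ this
  have hB : ∀ p ∈ Invs u, φ p ∈ Invs (u * d) := by
    intro p hp
    rw [mem_Invs] at hp ⊢
    obtain ⟨h1, h2⟩ := hp
    have hblk : blk μ ((p.1 : Fin n):ℕ) = blk μ ((p.2 : Fin n):ℕ) :=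
      Wset.inversion_same_blk hμ hu h1 h2
    refine ⟨D0.inv_lt hd h1 hblk, ?_⟩
    simp only [hφ, Perm.mul_apply, Perm.coe_inv, Equiv.apply_symm_apply]
    exact h2
  have hdisj : Disjoint (Invs d) ((Invs u).image φ) := by
    rw [Finset.disjoint_right]
    intro q hq hq'
    obtain ⟨p, hp, hpq⟩ := Finset.mem_image.mp hq
    rw [mem_Invs] at hp hq'
    have hblk : blk μ ((p.1 : Fin n):ℕ) = blk μ ((p.2 : Fin n):ℕ) :=
      Wset.inversion_same_blk hμ hu hp.1 hp.2
    have hq1 : d q.1 = p.1 := by rw [← hpq]; simp [hφ]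
    have hq2 : d q.2 = p.2 := by rw [← hpq]; simp [hφ]
    have hneq : blk μ ((d q.1 : Fin n):ℕ) ≠ blk μ ((d q.2 : Fin n):ℕ) := by
      intro he
      exact lt_asymm hq'.2 (hd q.1 q.2 hq'.1 he)
    rw [hq1, hq2] at hneq
    exact hneq hblk
  have hsub : Invs d ∪ (Invs u).image φ ⊆ Invs (u * d) := by
    intro q hq
    rcases Finset.mem_union.mp hq with h|h
    · exact hA h
    · obtain ⟨p, hp, hpq⟩ := Finset.mem_image.mp h
      rw [← hpq]
      exact hB p hp
  have hinj : Function.Injective φ := by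
    intro p q h
    rw [hφ, Prod.ext_iff] at h
    exact Prod.ext (d⁻¹.injective h.1) (d⁻¹.injective h.2)
  calc invn u + invn d = ((Invs u).image φ).card + invn d := by
        rw [invn, Finset.card_image_of_injective _ hinj]
    _ = (Invs d ∪ (Invs u).image φ).card := by
        rw [Finset.card_union_of_disjoint hdisj, invn]
        omega
    _ ≤ invn (u * d) := Finset.card_le_card hsub
-- ### Section 4: characterizations of `𝒟` and `𝓔`

lemma tval_inr (w : Perm (Fin n)) : tval (inr w : Grn r n) = 0 := by
  rw [tval]
  apply Finset.sum_eq_zero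
  intro i _
  show ((0 : Fin n → ZMod r) i).val = 0
  rw [Pi.zero_apply, ZMod.val_zero]

lemma right_inr' (w : Perm (Fin n)) : (inr w : Grn r n).right = w := rfl

lemma len_inr (hr : 2 ≤ r) (w : Perm (Fin n)) : len r n (inr w) = invn w := by
  rw [len_eq hr, tval_inr, right_inr', zero_add]

lemma mem_youngS_iff (hr : 2 ≤ r) {μ : List ℤ} (hμ : IsSignedComp n μ) (u : Perm (Fin n)) :
    u ∈ youngS r n μ ↔ u ∈ Wset μ := by
  rw [youngS, Subgroup.mem_comap, mem_Gmu_iff hr hμ]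
  constructor
  · exact fun h => h.2
  · exact fun h => ⟨fun j _ => rfl, h⟩

lemma mem_Dset_iff (hr : 2 ≤ r) {μ : List ℤ} (hμ : IsSignedComp n μ) (d : Perm (Fin n)) :
    d ∈ Dset r n μ ↔ d ∈ D0 μ := by
  constructor
  · intro hd
    obtain ⟨u, d₀, hu, hd₀, heq⟩ := exists_D0_decomp hμ d
    have h1 : d₀ * d⁻¹ ∈ youngS r n μ := by
      rw [mem_youngS_iff hr hμ]
      have : d₀ * d⁻¹ = u⁻¹ := by rw [heq]; group
      rw [this]
      exact Wset.inv_mem hu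
    have h2 := hd d₀ h1
    rw [len_inr hr, len_inr hr] at h2
    have h3 : invn u + invn d₀ ≤ invn d := by
      rw [heq]
      exact invn_add_le_mul hμ hu hd₀
    have h4 : invn u = 0 := by omega
    have h5 : u = 1 := eq_one_of_invn_eq_zero h4
    rw [h5, one_mul] at heq
    rw [heq]
    exact hd₀
  · intro hd0 w hw
    rw [mem_youngS_iff hr hμ] at hw
    have heq : w = (w * d⁻¹) * d := by group
    rw [len_inr hr, len_inr hr]
    calc invn d ≤ invn (w * d⁻¹) + invn d := by omega
      _ ≤ invn ((w * d⁻¹) * d) := invn_add_le_mul hμ hw hd0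
      _ = invn w := by rw [← heq]

lemma toAdd_mul_left' (a b : Grn r n) (j : Fin n) :
    Multiplicative.toAdd ((a * b).left : Multiplicative (Fin n → ZMod r)) j
      = Multiplicative.toAdd a.left j + Multiplicative.toAdd b.left (a.right⁻¹ j) := rfl

lemma tval_le_mul (hr : 2 ≤ r) {μ : List ℤ} (hμ : IsSignedComp n μ) {m e : Grn r n}
    (hm1 : ∀ j : Fin n, ¬ inP μ j → Multiplicative.toAdd m.left j = 0)
    (hm2 : m.right ∈ Wset μ)
    (he : ∀ j : Fin n, inP μ j → Multiplicative.toAdd e.left j = 0) :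
    tval e ≤ tval (m * e) := by
  classical
  set S : Finset (Fin n) := Finset.univ.filter (fun j => ¬ inP μ j) with hS
  have step1 : tval e = ∑ j ∈ S, (Multiplicative.toAdd e.left j).val := by
    rw [tval]
    symm
    apply Finset.sum_subset (Finset.subset_univ S)
    intro j _ hj
    rw [hS, Finset.mem_filter] at hj
    push_neg at hj
    rw [he j (hj (Finset.mem_univ j)), ZMod.val_zero]
  have hσS : ∀ j : Fin n, j ∈ S ↔ (m.right⁻¹ : Perm (Fin n)) j ∈ S := by
    intro j
    rw [hS, Finset.mem_filter, Finset.mem_filter]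
    have : inP μ ((m.right⁻¹ : Perm (Fin n)) j) ↔ inP μ j := by
      rw [inP, inP, Wset.inv_mem hm2 j]
    rw [this]
    simp
  have step2 : ∑ j ∈ S, (Multiplicative.toAdd e.left j).val
      = ∑ j ∈ S, (Multiplicative.toAdd e.left ((m.right⁻¹ : Perm (Fin n)) j)).val := by
    apply Finset.sum_equiv (m.right : Perm (Fin n)) ?_ ?_
    · intro j
      rw [hS, Finset.mem_filter, Finset.mem_filter]
      have h' : inP μ ((m.right : Perm (Fin n)) j) ↔ inP μ j := by
        rw [inP, inP, hm2 j]
      rw [h']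
      simp
    · intro j _
      rw [Perm.coe_inv, Equiv.symm_apply_apply]
  have step3 : ∑ j ∈ S, (Multiplicative.toAdd e.left ((m.right⁻¹ : Perm (Fin n)) j)).val
      = ∑ j ∈ S, (Multiplicative.toAdd ((m*e).left : Multiplicative (Fin n → ZMod r)) j).val := by
    apply Finset.sum_congr rfl
    intro j hj
    rw [hS, Finset.mem_filter] at hj
    rw [toAdd_mul_left' m e j, hm1 j hj.2, zero_add]
  rw [step1, step2, step3, tval]
  exact Finset.sum_le_sum_of_subset (Finset.subset_univ S)

lemma mem_Ecal_iff (hr : 2 ≤ r) {μ : List ℤ} (hμ : IsSignedComp n μ) (e : Grn r n) :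
    e ∈ Ecal r n μ ↔ (∀ j : Fin n, inP μ j → Multiplicative.toAdd e.left j = 0) ∧
      e.right ∈ D0 μ := by
  have : NeZero r := ⟨by omega⟩
  constructor
  · intro he
    have hD0 : e.right ∈ D0 μ := by
      obtain ⟨u, d₀, hu, hd₀, heq⟩ := exists_D0_decomp hμ e.right
      have hg : (inr u⁻¹ : Grn r n) * e * e⁻¹ ∈ Gmu r n μ := by
        have h : (inr u⁻¹ : Grn r n) * e * e⁻¹ = inr u⁻¹ := by group
        rw [h]
        exact inr_mem_Gmu hμ (Wset.inv_mem hu)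
      have hle := he ((inr u⁻¹ : Grn r n) * e) hg
      rw [len_eq hr, len_eq hr, tval_inr_mul] at hle
      have hright : ((inr u⁻¹ : Grn r n) * e).right = d₀ := by
        rw [mul_right, right_inr', heq]
        group
      rw [hright] at hle
      have h3 : invn u + invn d₀ ≤ invn e.right := by
        rw [heq]
        exact invn_add_le_mul hμ hu hd₀
      have h4 : invn u = 0 := by omega
      rw [eq_one_of_invn_eq_zero h4, one_mul] at heq
      rw [heq]
      exact hd₀
    refine ⟨?_, hD0⟩
    intro j hP
    by_contra ha
    set a : ZMod r := Multiplicative.toAdd e.left j with haa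
    set g : Grn r n := inl (Multiplicative.ofAdd (-(Pi.single j a : Fin n → ZMod r))) * e with hgg
    have hgm : g * e⁻¹ ∈ Gmu r n μ := by
      have h : g * e⁻¹ = inl (Multiplicative.ofAdd (-(Pi.single j a : Fin n → ZMod r))) := by
        rw [hgg]; group
      rw [h]
      apply inl_mem_Gmu hr hμ
      intro j' hj'
      have hne : j' ≠ j := fun hee => hj' (hee ▸ hP)
      show -(Pi.single j a : Fin n → ZMod r) j' = 0
      rw [Pi.single_eq_of_ne hne, neg_zero]
    have hle := he g hgm
    have hgright : g.right = e.right := by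
      rw [hgg, mul_right, right_inl, one_mul]
    have hgj : Multiplicative.toAdd (g.left : Multiplicative (Fin n → ZMod r)) j = 0 := by
      rw [hgg, toAdd_mul_left' _ e j]
      show -(Pi.single j a : Fin n → ZMod r) j + Multiplicative.toAdd e.left j = 0
      rw [Pi.single_eq_same, ← haa, neg_add_cancel]
    have hgj' : ∀ j' : Fin n, j' ≠ j →
        Multiplicative.toAdd (g.left : Multiplicative (Fin n → ZMod r)) j'
          = Multiplicative.toAdd e.left j' := by
      intro j' hne
      rw [hgg, toAdd_mul_left' _ e j']
      show -(Pi.single j a : Fin n → ZMod r) j' + Multiplicative.toAdd e.left j' = _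
      rw [Pi.single_eq_of_ne hne, neg_zero, zero_add]
    have htv : tval g + a.val = tval e := by
      rw [tval, tval, ← Finset.add_sum_erase _ _ (Finset.mem_univ j),
        ← Finset.add_sum_erase _ _ (Finset.mem_univ j), hgj, ZMod.val_zero, zero_add]
      rw [Finset.sum_congr rfl (fun j' hj' => by
        rw [hgj' j' (Finset.ne_of_mem_erase hj')])]
      have hak := congrArg ZMod.val haa
      omega
    have hval : 0 < a.val := ZMod.val_pos.mpr ha
    rw [len_eq hr, len_eq hr, hgright] at hle
    omega
  · rintro ⟨he1, he2⟩
    intro g hg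
    rw [mem_Gmu_iff hr hμ] at hg
    have heq : g = (g * e⁻¹) * e := by group
    rw [len_eq hr, len_eq hr, heq]
    have h1 : tval e ≤ tval ((g * e⁻¹) * e) := tval_le_mul hr hμ hg.1 hg.2 he1
    have h2 : invn e.right ≤ invn (((g * e⁻¹) * e).right) := by
      rw [mul_right]
      calc invn e.right ≤ invn ((g * e⁻¹).right) + invn e.right := by omega
        _ ≤ invn ((g * e⁻¹).right * e.right) := invn_add_le_mul hμ hg.2 he2
    omega
-- ### Section 5: final assembly

lemma mem_Ecal_def {μ : List ℤ} {e : Grn r n} :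
    e ∈ Ecal r n μ ↔ ∀ g : Grn r n, g * e⁻¹ ∈ Gmu r n μ → len r n e ≤ len r n g := Iff.rfl

lemma toAdd_inr_left (d : Perm (Fin n)) (x : Fin n) :
    Multiplicative.toAdd ((inr d : Grn r n).left : Multiplicative (Fin n → ZMod r)) x = 0 := rfl

lemma Ecal_coset_unique (hr : 2 ≤ r) {μ : List ℤ} (hμ : IsSignedComp n μ) {e e' : Grn r n}
    (he : e ∈ Ecal r n μ) (he' : e' ∈ Ecal r n μ) (hm : e' * e⁻¹ ∈ Gmu r n μ) : e' = e := by
  rw [mem_Ecal_iff hr hμ] at he he'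
  rw [mem_Gmu_iff hr hμ] at hm
  have heq : e' = (e' * e⁻¹) * e := by group
  have hright : e'.right = (e' * e⁻¹).right * e.right := by
    conv_lhs => rw [heq]
    exact mul_right _ _
  have hR1 : (e' * e⁻¹).right = 1 := by
    apply D0_unique_mul hμ hm.2 he.2
    rw [← hright]
    exact he'.2
  have hL : ∀ j : Fin n, Multiplicative.toAdd ((e' * e⁻¹).left :
      Multiplicative (Fin n → ZMod r)) j = 0 := by
    intro j
    have hj : Multiplicative.toAdd (e'.left : Multiplicative (Fin n → ZMod r)) j
        = Multiplicative.toAdd ((e' * e⁻¹).left : Multiplicative (Fin n → ZMod r)) j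
          + Multiplicative.toAdd e.left ((e' * e⁻¹).right⁻¹ j) := by
      conv_lhs => rw [heq]
      rw [toAdd_mul_left']
    rw [hR1] at hj
    have hid : ((1 : Perm (Fin n))⁻¹ j) = j := rfl
    rw [hid] at hj
    by_cases hP : inP μ j
    · rw [he'.1 j hP, he.1 j hP, add_zero] at hj
      exact hj.symm
    · exact hm.1 j hP
  have hme : e' * e⁻¹ = 1 := by
    ext
    · exact hL _
    · rw [hR1]
      rfl
  calc e' = (e' * e⁻¹) * e := heq
    _ = e := by rw [hme, one_mul]

lemma exists_Ecal_coset (hr : 2 ≤ r) {μ : List ℤ} (hμ : IsSignedComp n μ) (g : Grn r n) :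
    ∃ e : Grn r n, e ∈ Ecal r n μ ∧ e * g⁻¹ ∈ Gmu r n μ := by
  classical
  obtain ⟨u, d₀, hu, hd₀, hdec⟩ := exists_D0_decomp hμ g.right
  set cP : Fin n → ZMod r :=
    fun j => if inP μ j then -(Multiplicative.toAdd g.left (u j)) else 0 with hcP
  set m₀ : Grn r n := inl (Multiplicative.ofAdd cP) * inr u⁻¹ with hm₀
  have hm₀r : m₀.right = u⁻¹ := by rw [hm₀, mul_right, right_inl, right_inr', one_mul]
  have hm₀l : ∀ j : Fin n, Multiplicative.toAdd (m₀.left :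
      Multiplicative (Fin n → ZMod r)) j = cP j := by
    intro j
    rw [hm₀, toAdd_mul_left']
    rw [toAdd_inr_left, add_zero]
    rfl
  have hm₀mem : m₀ ∈ Gmu r n μ := by
    rw [hm₀]
    apply Subgroup.mul_mem
    · apply inl_mem_Gmu hr hμ
      intro j hj
      rw [hcP]
      exact if_neg hj
    · exact inr_mem_Gmu hμ (Wset.inv_mem hu)
  refine ⟨m₀ * g, ?_, ?_⟩
  swap
  · have h : m₀ * g * g⁻¹ = m₀ := by group
    rw [h]
    exact hm₀mem
  rw [mem_Ecal_iff hr hμ]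
  constructor
  · intro j hP
    rw [toAdd_mul_left', hm₀l j, hm₀r, hcP]
    simp only [if_pos hP]
    have : ((u⁻¹)⁻¹ j) = u j := by rw [inv_inv]
    rw [this, neg_add_cancel]
  · rw [mul_right, hm₀r, hdec, ← mul_assoc]
    rw [inv_mul_cancel, one_mul]
    exact hd₀
theorem stmt3 (r n : ℕ) (hr : 2 ≤ r) (hn : 1 ≤ n) (μ : List ℤ) (hμ : IsSignedComp n μ) :
    Set.BijOn (fun p : Grn r n × Equiv.Perm (Fin n) => p.1 * inr p.2)
      ((Tneg r n μ : Set (Grn r n)) ×ˢ Dset r n μ) (Ecal r n μ) ∧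
    (∀ g : Grn r n, ∃! e : Grn r n, e ∈ Ecal r n μ ∧ e * g⁻¹ ∈ Gmu r n μ) ∧
    (∀ g : Grn r n, ∃! e : Grn r n, e * g⁻¹ ∈ Gmu r n μ ∧
        ∀ h : Grn r n, h * g⁻¹ ∈ Gmu r n μ → len r n e ≤ len r n h) := by
  refine ⟨⟨?_, ?_, ?_⟩, ?_, ?_⟩
  · -- MapsTo
    rintro ⟨t, d⟩ ⟨ht0, hd0⟩
    have ht : t ∈ Tneg r n μ := ht0
    have hd : d ∈ Dset r n μ := hd0
    rw [mem_Tneg_iff hr hμ] at ht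
    rw [mem_Dset_iff hr hμ] at hd
    show t * inr d ∈ Ecal r n μ
    rw [mem_Ecal_iff hr hμ]
    constructor
    · intro j hP
      rw [toAdd_mul_left', toAdd_inr_left, add_zero]
      exact ht.2 j hP
    · rw [mul_right, right_inr', ht.1, one_mul]
      exact hd
  · -- InjOn
    rintro ⟨t, d⟩ ⟨ht0, _⟩ ⟨t', d'⟩ ⟨ht0', _⟩ heq
    have ht : t ∈ Tneg r n μ := ht0
    have ht' : t' ∈ Tneg r n μ := ht0'
    rw [mem_Tneg_iff hr hμ] at ht ht'
    have heq : t * inr d = t' * inr d' := heq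
    have hright := congrArg (fun x : Grn r n => x.right) heq
    simp only [mul_right, right_inr', ht.1, ht'.1, one_mul] at hright
    have hd : d = d' := hright
    subst hd
    have ht : t = t' := mul_right_cancel heq
    rw [ht]
  · -- SurjOn
    intro e he0
    have he : e ∈ Ecal r n μ := he0
    rw [mem_Ecal_iff hr hμ] at he
    refine ⟨(inl e.left, e.right), ⟨?_, ?_⟩, ?_⟩
    · show (inl e.left : Grn r n) ∈ Tneg r n μ
      rw [mem_Tneg_iff hr hμ]
      exact ⟨rfl, he.1⟩
    · show e.right ∈ Dset r n μ
      rw [mem_Dset_iff hr hμ]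
      exact he.2
    · exact inl_left_mul_inr_right e
  · -- unique Ecal representative in each coset
    intro g
    obtain ⟨e, he, hc⟩ := exists_Ecal_coset hr hμ g
    refine ⟨e, ⟨he, hc⟩, ?_⟩
    rintro e' ⟨he', hc'⟩
    apply Ecal_coset_unique hr hμ he he'
    have : e' * e⁻¹ = (e' * g⁻¹) * (e * g⁻¹)⁻¹ := by group
    rw [this]
    exact Subgroup.mul_mem _ hc' (Subgroup.inv_mem _ hc)
  · -- unique minimal-length representative in each coset
    intro g
    obtain ⟨e, he, hc⟩ := exists_Ecal_coset hr hμ g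
    refine ⟨e, ⟨hc, ?_⟩, ?_⟩
    · intro h hh
      apply (mem_Ecal_def.mp he) h
      have : h * e⁻¹ = (h * g⁻¹) * (e * g⁻¹)⁻¹ := by group
      rw [this]
      exact Subgroup.mul_mem _ hh (Subgroup.inv_mem _ hc)
    · rintro e' ⟨hc', hmin'⟩
      have he' : e' ∈ Ecal r n μ := by
        rw [mem_Ecal_def]
        intro g' hg'
        apply hmin' g'
        have : g' * g⁻¹ = (g' * e'⁻¹) * (e' * g⁻¹) := by group
        rw [this]
        exact Subgroup.mul_mem _ hg' hc'
      apply Ecal_coset_unique hr hμ he he'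
      have : e' * e⁻¹ = (e' * g⁻¹) * (e * g⁻¹)⁻¹ := by group
      rw [this]
      exact Subgroup.mul_mem _ hc' (Subgroup.inv_mem _ hc)

end CycSol
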